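/- Let f(x,y,u) = y(y−1)/(x−y) and h(x,y,u) = (2xy − x − y)/(x−y)^2 be the data of the Gibbons–Tsarev system (33). Then the extension ∂_i v = g(p_i, u, v) ∂_i u with g(p,u,v) = v(v−1)/(p−v) is compatible with this system: the expression E(x,y) = g_1(x,u,v)·f(y,x,u) + g_2(x,u,v) + g_3(x,u,v)·g(y,u,v) + g(x,u,v)·h(x,y,u) satisfies E(x,y) = E(y,x) for all x, y, v pairwise distinct and all u. -/

import Mathlib

/-- Partial derivative of `g(p,u,v)` in its first argument. -/
noncomputable def e1 (g : ℝ → ℝ → ℝ → ℝ) (p u v : ℝ) : ℝ := deriv (fun s => g s u v) p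
/-- Partial derivative of `g(p,u,v)` in its second argument. -/
noncomputable def e2 (g : ℝ → ℝ → ℝ → ℝ) (p u v : ℝ) : ℝ := deriv (fun s => g p s v) u
/-- Partial derivative of `g(p,u,v)` in its third argument. -/
noncomputable def e3 (g : ℝ → ℝ → ℝ → ℝ) (p u v : ℝ) : ℝ := deriv (fun s => g p u s) v

/-- The compatibility expression `E(x,y)` for an extension `∂ᵢv = g(pᵢ,u,v) ∂ᵢu` of a
one-field Gibbons–Tsarev system with data `f`, `h`. -/
noncomputable def extE (f h g : ℝ → ℝ → ℝ → ℝ) (x y u v : ℝ) : ℝ :=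
  e1 g x u v * f y x u + e2 g x u v + e3 g x u v * g y u v + g x u v * h x y u

lemma deriv1 (p v : ℝ) (hpv : p - v ≠ 0) :
    deriv (fun s => v * (v - 1) / (s - v)) p = -(v * (v - 1)) / (p - v) ^ 2 := by
  have h1 : HasDerivAt (fun s : ℝ => s - v) 1 p := (hasDerivAt_id p).sub_const v
  have h2 := (h1.inv hpv).const_mul (v * (v - 1))
  have h3 : HasDerivAt (fun s => v * (v - 1) / (s - v))
      (v * (v - 1) * (-(1 / (p - v) ^ 2))) p := by
    simpa [div_eq_mul_inv] using h2
  rw [h3.deriv]; ring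

lemma deriv3 (p v : ℝ) (hpv : p - v ≠ 0) :
    deriv (fun s => s * (s - 1) / (p - s)) v =
      ((2 * v - 1) * (p - v) + v * (v - 1)) / (p - v) ^ 2 := by
  have h1 : HasDerivAt (fun s : ℝ => s * (s - 1)) (2 * v - 1) v := by
    have := (hasDerivAt_id v).fun_mul ((hasDerivAt_id v).sub_const 1)
    simpa [mul_comm] using this.congr_deriv (by simp only [id_eq]; ring)
  have h2 : HasDerivAt (fun s : ℝ => p - s) (-1) v := by
    simpa using (hasDerivAt_id v).const_sub p
  have h3 := h1.fun_div h2 hpv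
  rw [h3.deriv]; ring

theorem stmt_3 (f h g : ℝ → ℝ → ℝ → ℝ)
    (hf : ∀ x y u : ℝ, f x y u = y * (y - 1) / (x - y))
    (hh : ∀ x y u : ℝ, h x y u = (2 * x * y - x - y) / (x - y) ^ 2)
    (hg : ∀ p u v : ℝ, g p u v = v * (v - 1) / (p - v)) :
    ∀ (x y u v : ℝ), x ≠ y → x ≠ v → y ≠ v →
      extE f h g x y u v = extE f h g y x u v := by
  intro x y u v hxy hxv hyv
  have hxv' : x - v ≠ 0 := sub_ne_zero.mpr hxv
  have hyv' : y - v ≠ 0 := sub_ne_zero.mpr hyv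
  have hxy' : x - y ≠ 0 := sub_ne_zero.mpr hxy
  have hyx' : y - x ≠ 0 := sub_ne_zero.mpr hxy.symm
  have E1 : ∀ p : ℝ, p - v ≠ 0 → e1 g p u v = -(v * (v - 1)) / (p - v) ^ 2 := by
    intro p hp
    have : (fun s => g s u v) = fun s => v * (v - 1) / (s - v) := funext fun s => hg s u v
    rw [e1, this, deriv1 p v hp]
  have E2 : ∀ p : ℝ, e2 g p u v = 0 := by
    intro p
    have : (fun s => g p s v) = fun _ => v * (v - 1) / (p - v) := funext fun s => hg p s v
    rw [e2, this, deriv_const]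
  have E3 : ∀ p : ℝ, p - v ≠ 0 →
      e3 g p u v = ((2 * v - 1) * (p - v) + v * (v - 1)) / (p - v) ^ 2 := by
    intro p hp
    have : (fun s => g p u s) = fun s => s * (s - 1) / (p - s) := funext fun s => hg p u s
    rw [e3, this, deriv3 p v hp]
  simp only [extE, E1 x hxv', E1 y hyv', E2, E3 x hxv', E3 y hyv', hf, hh, hg]
  field_simp
  ring
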